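/- Let F : ℝ → ℂ be measurable with ∫ x²|F(x)| dx < ∞, ∫ F(x) dx = 1, ∫ x·F(x) dx = 0, and set ν = 2∫ x²·F(x) dx with ν real and positive. Define f(t) = ∫ e^{itx} F(x) dx and assume |f(t)| ≤ 1 for all t ∈ ℝ. Then for each t ∈ ℝ, f(t/√N)^N → exp(−ν t²/4) as N → ∞. -/

import Mathlib

open MeasureTheory Filter Topology

/-- Third-order Taylor bound for `exp`. -/
lemma clt_aux_cubic (w : ℂ) (hw : ‖w‖ ≤ 1) :
    ‖Complex.exp w - 1 - w - w ^ 2 / 2‖ ≤ ‖w‖ ^ 3 := by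
  have h := Complex.exp_bound hw (n := 3) (by norm_num)
  have hsum : (∑ m ∈ Finset.range 3, w ^ m / m.factorial) = 1 + w + w ^ 2 / 2 := by
    simp [Finset.sum_range_succ, Nat.factorial]
  rw [hsum] at h
  have hE : Complex.exp w - 1 - w - w ^ 2 / 2 = Complex.exp w - (1 + w + w ^ 2 / 2) := by ring
  rw [hE]
  refine h.trans ?_
  have h1 : ((3:ℕ).succ : ℝ) * (((3:ℕ).factorial : ℝ) * 3)⁻¹ ≤ 1 := by
    norm_num [Nat.factorial]
  nlinarith [pow_nonneg (norm_nonneg w) 3]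

lemma clt_aux_absw (s x : ℝ) :
    ‖Complex.I * s * x‖ = |s| * |x| := by
  simp [map_mul, Complex.norm_real]

/-- Global quadratic bound for the second-order remainder of `exp (I s x)`. -/
lemma clt_aux_quad (s x : ℝ) :
    ‖Complex.exp (Complex.I * s * x) - 1 - Complex.I * s * x
      - (Complex.I * s * x) ^ 2 / 2‖ ≤ 4 * (s ^ 2 * x ^ 2) := by
  set w : ℂ := Complex.I * s * x with hw
  have habs : ‖w‖ = |s| * |x| := clt_aux_absw s x
  have habs2 : ‖w‖ ^ 2 = s ^ 2 * x ^ 2 := by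
    rw [habs]; rw [mul_pow, sq_abs, sq_abs]
  rcases le_or_gt (‖w‖) 1 with h1 | h1
  · refine (clt_aux_cubic w h1).trans ?_
    calc ‖w‖ ^ 3 = ‖w‖ ^ 2 * ‖w‖ := by ring
    _ ≤ ‖w‖ ^ 2 * 1 := by
        exact mul_le_mul_of_nonneg_left h1 (by positivity)
    _ ≤ 4 * (s ^ 2 * x ^ 2) := by rw [mul_one, habs2]; nlinarith [sq_nonneg (s*x)]
  · have hexp : ‖Complex.exp w‖ = 1 := by
      rw [Complex.norm_exp]
      have : w.re = 0 := by
        simp [hw, Complex.mul_re, Complex.mul_im]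
      rw [this, Real.exp_zero]
    have htri : ‖Complex.exp w - 1 - w - w ^ 2 / 2‖
        ≤ 1 + 1 + ‖w‖ + ‖w‖ ^ 2 / 2 := by
      calc ‖Complex.exp w - 1 - w - w ^ 2 / 2‖
          ≤ ‖Complex.exp w - 1 - w‖ + ‖w ^ 2 / 2‖ :=
            norm_sub_le _ _
        _ ≤ (‖Complex.exp w - 1‖ + ‖w‖) + ‖w ^ 2 / 2‖ :=
            add_le_add (norm_sub_le _ _) le_rfl
        _ ≤ ((‖Complex.exp w‖ + ‖(1:ℂ)‖) + ‖w‖)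
              + ‖w ^ 2 / 2‖ := by
            gcongr
            exact norm_sub_le _ _
        _ = 1 + 1 + ‖w‖ + ‖w‖ ^ 2 / 2 := by
            rw [hexp, norm_div, norm_pow, norm_one]
            norm_num
    refine htri.trans ?_
    rw [← habs2]
    nlinarith [norm_nonneg w]

/-- If `n * (z n - 1) → c` then `z n ^ n → exp c`. -/
lemma clt_aux_pow_exp (z : ℕ → ℂ) (c : ℂ)
    (h : Tendsto (fun n : ℕ => (n : ℂ) * (z n - 1)) atTop (𝓝 c)) :
    Tendsto (fun n : ℕ => z n ^ n) atTop (𝓝 (Complex.exp c)) := by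
  have hinv : Tendsto (fun n : ℕ => ((n : ℂ))⁻¹) atTop (𝓝 0) :=
    tendsto_inv_atTop_nhds_zero_nat (𝕜 := ℂ)
  have h0 : Tendsto (fun n : ℕ => z n - 1) atTop (𝓝 0) := by
    have := h.mul hinv
    rw [mul_zero] at this
    refine this.congr' ?_
    filter_upwards [eventually_ge_atTop 1] with n hn
    have hne : (n : ℂ) ≠ 0 := Nat.cast_ne_zero.mpr (by omega)
    field_simp
  have hsmall : ∀ᶠ n in atTop, ‖z n - 1‖ ≤ 1 / 2 := by
    have := h0.norm
    rw [norm_zero] at this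
    exact this.eventually_le_const (by norm_num)
  -- the correction term n * (log (z n) - (z n - 1)) tends to 0
  have hbnd : Tendsto (fun n : ℕ => ‖(n : ℂ) * (z n - 1)‖ ^ 2 * ((n : ℝ))⁻¹)
      atTop (𝓝 0) := by
    have hn1 : Tendsto (fun n : ℕ => ‖(n : ℂ) * (z n - 1)‖ ^ 2) atTop (𝓝 (‖c‖ ^ 2)) :=
      (h.norm).pow 2
    have hn2 : Tendsto (fun n : ℕ => ((n : ℝ))⁻¹) atTop (𝓝 0) :=
      tendsto_inv_atTop_nhds_zero_nat
    simpa using hn1.mul hn2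
  have hcorr : Tendsto (fun n : ℕ => (n : ℂ) * (Complex.log (z n) - (z n - 1)))
      atTop (𝓝 0) := by
    refine squeeze_zero_norm' ?_ hbnd
    filter_upwards [eventually_ge_atTop 1, hsmall] with n hn hs
    have hne : (n : ℝ) ≠ 0 := Nat.cast_ne_zero.mpr (by omega)
    have hlt : ‖z n - 1‖ < 1 := lt_of_le_of_lt hs (by norm_num)
    have hlog : ‖Complex.log (1 + (z n - 1)) - (z n - 1)‖
        ≤ ‖z n - 1‖ ^ 2 * (1 - ‖z n - 1‖)⁻¹ / 2 :=
      Complex.norm_log_one_add_sub_self_le hlt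
    have h1z : (1 : ℂ) + (z n - 1) = z n := by ring
    rw [h1z] at hlog
    have hinvle : (1 - ‖z n - 1‖)⁻¹ ≤ 2 := by
      rw [inv_le_comm₀ (by linarith) (by norm_num)]
      linarith
    have hlog2 : ‖Complex.log (z n) - (z n - 1)‖ ≤ ‖z n - 1‖ ^ 2 := by
      refine hlog.trans ?_
      have : ‖z n - 1‖ ^ 2 * (1 - ‖z n - 1‖)⁻¹ ≤ ‖z n - 1‖ ^ 2 * 2 := by
        exact mul_le_mul_of_nonneg_left hinvle (by positivity)
      linarith
    have hnormn : ‖(n : ℂ)‖ = (n : ℝ) := by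
      simp
    rw [norm_mul, hnormn, norm_mul, hnormn, mul_pow]
    have : (n:ℝ) * ‖z n - 1‖ ≤ (n:ℝ) * ‖z n - 1‖ := le_refl _
    have hnn : (0:ℝ) ≤ (n:ℝ) := Nat.cast_nonneg n
    calc (n:ℝ) * ‖Complex.log (z n) - (z n - 1)‖
        ≤ (n:ℝ) * ‖z n - 1‖ ^ 2 := mul_le_mul_of_nonneg_left hlog2 hnn
      _ = (n:ℝ) ^ 2 * ‖z n - 1‖ ^ 2 * ((n:ℝ))⁻¹ := by field_simp
  have hlogten : Tendsto (fun n : ℕ => (n : ℂ) * Complex.log (z n)) atTop (𝓝 c) := by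
    have := h.add hcorr
    rw [add_zero] at this
    refine this.congr ?_
    intro n
    ring
  have hexp := (Complex.continuous_exp.tendsto c).comp hlogten
  refine hexp.congr' ?_
  filter_upwards [hsmall] with n hs
  have hne : z n ≠ 0 := by
    intro hz
    rw [hz] at hs
    simp at hs
    norm_num at hs
  simp only [Function.comp_apply]
  rw [Complex.exp_nat_mul, Complex.exp_log hne]

lemma clt_aux_Rmeas (F : ℝ → ℂ) (hmeas : Measurable F) (s : ℝ) :
    Measurable (fun x : ℝ =>
      (Complex.exp (Complex.I * s * x) - 1 - Complex.I * s * x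
        - (Complex.I * s * x) ^ 2 / 2) * F x) := by
  have m1 : Measurable (fun x : ℝ => Complex.I * s * x) :=
    measurable_const.mul Complex.measurable_ofReal
  exact ((((Complex.measurable_exp.comp m1).sub measurable_const).sub m1).sub
    ((m1.pow_const 2).div_const 2)).mul hmeas

/-- Dominated convergence for the rescaled second-order remainder. -/
lemma clt_aux_dct (F : ℝ → ℂ) (hmeas : Measurable F)
    (h2abs : Integrable (fun x : ℝ => x ^ 2 * ‖F x‖))
    (s : ℕ → ℝ) (hs0 : Tendsto s atTop (𝓝 0))
    (hsne : ∀ᶠ N in atTop, s N ≠ 0) :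
    Tendsto (fun N : ℕ => ∫ x : ℝ,
      (((s N : ℝ) : ℂ) ^ 2)⁻¹ *
        ((Complex.exp (Complex.I * (s N) * x) - 1 - Complex.I * (s N) * x
          - (Complex.I * (s N) * x) ^ 2 / 2) * F x)) atTop (𝓝 0) := by
  have h0 : (0 : ℂ) = ∫ _ : ℝ, (0 : ℂ) := by simp
  rw [h0]
  have hnormc : ∀ u : ℝ, ‖(((u : ℝ) : ℂ) ^ 2)⁻¹‖ = (u ^ 2)⁻¹ := by
    intro u
    rw [norm_inv, norm_pow, Complex.norm_real, Real.norm_eq_abs, sq_abs]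
  refine tendsto_integral_of_dominated_convergence
    (fun x : ℝ => 4 * (x ^ 2 * ‖F x‖))
    (fun N => (measurable_const.mul (clt_aux_Rmeas F hmeas (s N))).aestronglyMeasurable)
    (h2abs.const_mul 4) ?_ ?_
  · intro N
    filter_upwards with x
    rcases eq_or_ne (s N) 0 with h0' | h0'
    · rw [h0']
      simp only [Complex.ofReal_zero, mul_zero, zero_mul, Complex.exp_zero]
      norm_num
      positivity
    · rw [norm_mul, norm_mul, hnormc]
      have hq := clt_aux_quad (s N) x
      have hu2 : (0:ℝ) < (s N) ^ 2 := by positivity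
      calc ((s N) ^ 2)⁻¹ * (‖Complex.exp (Complex.I * (s N) * x) - 1
            - Complex.I * (s N) * x - (Complex.I * (s N) * x) ^ 2 / 2‖ * ‖F x‖)
          ≤ ((s N) ^ 2)⁻¹ * ((4 * ((s N) ^ 2 * x ^ 2)) * ‖F x‖) := by
            gcongr
        _ = 4 * (x ^ 2 * ‖F x‖) := by
            show _ = 4 * (x ^ 2 * ‖F x‖)
            field_simp
  · filter_upwards with x
    have habs0 : Tendsto (fun N : ℕ => |s N|) atTop (𝓝 0) := by
      simpa using hs0.abs
    have hg : Tendsto (fun N : ℕ => |s N| * (|x| ^ 3 * ‖F x‖)) atTop (𝓝 0) := by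
      simpa using habs0.mul_const (|x| ^ 3 * ‖F x‖)
    refine squeeze_zero_norm' ?_ hg
    have hsm : ∀ᶠ N : ℕ in atTop, |s N| * |x| ≤ 1 := by
      filter_upwards [habs0.eventually_le_const
        (show (0:ℝ) < (|x| + 1)⁻¹ by positivity)] with N hN
      calc |s N| * |x| ≤ (|x| + 1)⁻¹ * |x| :=
            mul_le_mul_of_nonneg_right hN (abs_nonneg x)
        _ ≤ (|x| + 1)⁻¹ * (|x| + 1) := by gcongr; linarith
        _ = 1 := by
            rw [inv_mul_cancel₀]
            positivity
    filter_upwards [hsm, hsne] with N h1 h2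
    have habsne : |s N| ≠ 0 := abs_ne_zero.mpr h2
    have hw : ‖Complex.I * (s N) * x‖ ≤ 1 := by
      rw [clt_aux_absw]; exact h1
    have hc := clt_aux_cubic _ hw
    rw [norm_mul, norm_mul, hnormc]
    calc ((s N) ^ 2)⁻¹ * (‖Complex.exp (Complex.I * (s N) * x) - 1
          - Complex.I * (s N) * x - (Complex.I * (s N) * x) ^ 2 / 2‖ * ‖F x‖)
        ≤ ((s N) ^ 2)⁻¹ * ((|s N| * |x|) ^ 3 * ‖F x‖) := by
          gcongr
          rw [← clt_aux_absw (s N) x]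
          exact hc
      _ = |s N| * (|x| ^ 3 * ‖F x‖) := by
          field_simp
          rw [← sq_abs (s N)]

theorem clt_for_complex_densities (F : ℝ → ℂ) (ν : ℝ)
    (hmeas : Measurable F)
    (hF : Integrable F)
    (h2abs : Integrable (fun x : ℝ => x ^ 2 * ‖F x‖))
    (hnorm : ∫ x : ℝ, F x = 1)
    (hfirst : ∫ x : ℝ, (x : ℂ) * F x = 0)
    (hν : 0 < ν)
    (hν2 : (2 * ∫ x : ℝ, (x : ℂ) ^ 2 * F x) = (ν : ℂ))
    (hfb : ∀ t : ℝ,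
      ‖∫ x : ℝ, Complex.exp (Complex.I * t * x) * F x‖ ≤ 1)
    (t : ℝ) :
    Tendsto
      (fun N : ℕ =>
        (∫ x : ℝ, Complex.exp (Complex.I * (t / Real.sqrt N) * x) * F x) ^ N)
      atTop (𝓝 (Complex.exp (-(ν : ℂ) * (t:ℂ)^2 / 4))) := by
  -- norm of the oscillating exponential is 1
  have hexp1 : ∀ (s x : ℝ), ‖Complex.exp (Complex.I * s * x)‖ = 1 := by
    intro s x
    rw [Complex.norm_exp]
    have : (Complex.I * s * x).re = 0 := by simp [Complex.mul_re, Complex.mul_im]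
    rw [this, Real.exp_zero]
  -- integrability facts
  have hint_exp : ∀ s : ℝ,
      Integrable (fun x : ℝ => Complex.exp (Complex.I * s * x) * F x) := by
    intro s
    refine hF.bdd_mul (c := 1) ?_ (Eventually.of_forall fun x => ?_)
    · exact (Complex.measurable_exp.comp
        (measurable_const.mul Complex.measurable_ofReal)).aestronglyMeasurable
    · rw [hexp1]
  have hint_x : Integrable (fun x : ℝ => (x : ℂ) * F x) := by
    refine (hF.norm.add h2abs).mono'
      ((Complex.measurable_ofReal.mul hmeas).aestronglyMeasurable) ?_
    filter_upwards with x
    rw [norm_mul, Complex.norm_real]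
    have h1 : ‖x‖ ≤ 1 + x ^ 2 := by
      rw [Real.norm_eq_abs]
      nlinarith [abs_nonneg x, sq_abs x]
    have h2 : ‖F x‖ = ‖F x‖ := rfl
    calc ‖x‖ * ‖F x‖ ≤ (1 + x ^ 2) * ‖F x‖ :=
          mul_le_mul_of_nonneg_right h1 (norm_nonneg _)
      _ = ‖F x‖ + x ^ 2 * ‖F x‖ := by rw [h2]; ring
  have hint_x2 : Integrable (fun x : ℝ => (x : ℂ) ^ 2 * F x) := by
    refine h2abs.mono'
      (((Complex.measurable_ofReal.pow_const 2).mul hmeas).aestronglyMeasurable) ?_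
    filter_upwards with x
    rw [norm_mul, norm_pow, Complex.norm_real, Real.norm_eq_abs, sq_abs]
  have hint_R : ∀ s : ℝ, Integrable (fun x : ℝ =>
      (Complex.exp (Complex.I * s * x) - 1 - Complex.I * s * x
        - (Complex.I * s * x) ^ 2 / 2) * F x) := by
    intro s
    refine (h2abs.const_mul (4 * s ^ 2)).mono'
      (clt_aux_Rmeas F hmeas s).aestronglyMeasurable ?_
    filter_upwards with x
    rw [norm_mul]
    have hq := clt_aux_quad s x
    calc ‖Complex.exp (Complex.I * s * x) - 1 - Complex.I * s * x
          - (Complex.I * s * x) ^ 2 / 2‖ * ‖F x‖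
        ≤ (4 * (s ^ 2 * x ^ 2)) * ‖F x‖ :=
          mul_le_mul_of_nonneg_right hq (norm_nonneg _)
      _ = 4 * s ^ 2 * (x ^ 2 * ‖F x‖) := by
          show _ = 4 * s ^ 2 * (x ^ 2 * ‖F x‖); ring
  have hm2 : (∫ x : ℝ, (x : ℂ) ^ 2 * F x) = (ν : ℂ) / 2 := by
    field_simp
    linear_combination hν2
  -- second-order splitting of the integral
  have hsplit : ∀ s : ℝ,
      (∫ x : ℝ, (Complex.exp (Complex.I * s * x) - 1 - Complex.I * s * x
        - (Complex.I * s * x) ^ 2 / 2) * F x)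
      = (∫ x : ℝ, Complex.exp (Complex.I * s * x) * F x) - 1
          + (s : ℂ) ^ 2 * (ν : ℂ) / 4 := by
    intro s
    have e1 : ∀ x : ℝ,
        (Complex.exp (Complex.I * s * x) - 1 - Complex.I * s * x
          - (Complex.I * s * x) ^ 2 / 2) * F x
        = Complex.exp (Complex.I * s * x) * F x - F x
            - Complex.I * s * ((x : ℂ) * F x)
            - (Complex.I * s) ^ 2 / 2 * ((x : ℂ) ^ 2 * F x) := by
      intro x; ring
    simp only [e1]
    have hCint : Integrable (fun x : ℝ => Complex.I * s * ((x : ℂ) * F x)) :=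
      hint_x.const_mul _
    have hDint : Integrable
        (fun x : ℝ => (Complex.I * s) ^ 2 / 2 * ((x : ℂ) ^ 2 * F x)) :=
      hint_x2.const_mul _
    have hAB : Integrable
        (fun x : ℝ => Complex.exp (Complex.I * s * x) * F x - F x) :=
      (hint_exp s).sub hF
    have hABC : Integrable (fun x : ℝ =>
        Complex.exp (Complex.I * s * x) * F x - F x
          - Complex.I * s * ((x : ℂ) * F x)) := hAB.sub hCint
    rw [integral_sub hABC hDint, integral_sub hAB hCint,
      integral_sub (hint_exp s) hF, integral_const_mul, integral_const_mul,
      hfirst, hnorm, hm2]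
    have hI2 : (Complex.I * (s : ℂ)) ^ 2 = -((s : ℂ) ^ 2) := by
      rw [mul_pow, Complex.I_sq]; ring
    rw [hI2]
    ring
  -- trivial case t = 0
  rcases eq_or_ne t 0 with rfl | ht
  · simp only [Complex.ofReal_zero, zero_div, mul_zero, zero_mul,
      Complex.exp_zero, one_mul, hnorm, one_pow, ne_eq, OfNat.ofNat_ne_zero,
      not_false_eq_true, zero_pow, neg_zero]
    exact tendsto_const_nhds
  -- main case t ≠ 0
  apply clt_aux_pow_exp
  have hs0 : Tendsto (fun N : ℕ => t / Real.sqrt N) atTop (𝓝 0) := by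
    have hsq : Tendsto (fun N : ℕ => Real.sqrt N) atTop atTop := by
      have h12 : Tendsto (fun x : ℝ => x ^ (1/2 : ℝ)) atTop atTop :=
        tendsto_rpow_atTop (by norm_num)
      refine (h12.comp tendsto_natCast_atTop_atTop).congr fun N => ?_
      show ((N : ℝ)) ^ (1/2 : ℝ) = Real.sqrt N
      exact (Real.sqrt_eq_rpow _).symm
    exact tendsto_const_nhds.div_atTop hsq
  have hsne : ∀ᶠ N : ℕ in atTop, t / Real.sqrt N ≠ 0 := by
    filter_upwards [eventually_ge_atTop 1] with N hN
    have hNpos : (0:ℝ) < (N:ℝ) := by exact_mod_cast Nat.pos_of_ne_zero (by omega)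
    exact div_ne_zero ht (ne_of_gt (Real.sqrt_pos.2 hNpos))
  have hDCT := clt_aux_dct F hmeas h2abs (fun N : ℕ => t / Real.sqrt N) hs0 hsne
  have h1 := (hDCT.const_mul ((t:ℂ) ^ 2)).sub_const ((ν:ℂ) * (t:ℂ) ^ 2 / 4)
  rw [mul_zero, zero_sub] at h1
  have h2 : (-((ν:ℂ) * (t:ℂ) ^ 2 / 4) : ℂ) = -(ν:ℂ) * (t:ℂ) ^ 2 / 4 := by ring
  rw [h2] at h1
  refine h1.congr' ?_
  filter_upwards [eventually_ge_atTop 1] with N hN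
  have hNpos : (0:ℝ) < (N:ℝ) := by exact_mod_cast Nat.pos_of_ne_zero (by omega)
  have hsqpos : 0 < Real.sqrt N := Real.sqrt_pos.2 hNpos
  have hsnn : t / Real.sqrt N ≠ 0 := div_ne_zero ht (ne_of_gt hsqpos)
  have hs2 : (t / Real.sqrt N) ^ 2 * (N:ℝ) = t ^ 2 := by
    rw [div_pow, Real.sq_sqrt hNpos.le]
    field_simp
  have hc : ((t / Real.sqrt N : ℝ) : ℂ) ^ 2 * (N : ℂ) = (t : ℂ) ^ 2 := by
    exact_mod_cast congrArg (fun r : ℝ => (r : ℂ)) hs2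
  have htne : (t : ℂ) ≠ 0 := Complex.ofReal_ne_zero.mpr ht
  have hsqne : ((Real.sqrt N : ℝ) : ℂ) ≠ 0 :=
    Complex.ofReal_ne_zero.mpr (ne_of_gt hsqpos)
  have hsp := hsplit (t / Real.sqrt N)
  push_cast at hsp hc ⊢
  rw [integral_const_mul, hsp, ← hc]
  set u : ℂ := (t : ℂ) / (Real.sqrt (N : ℝ) : ℂ) with hu
  have hu2 : u ^ 2 ≠ 0 := pow_ne_zero 2 (div_ne_zero htne hsqne)
  have hcancel : u ^ 2 * (u ^ 2)⁻¹ = 1 := mul_inv_cancel₀ hu2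
  linear_combination ((N : ℂ) *
    ((∫ x : ℝ, Complex.exp (Complex.I * u * x) * F x) - 1
      + u ^ 2 * (ν : ℂ) / 4)) * hcancel
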